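/- For a closed (D+1)-colored graph G, the number of faces (bicolored 2-bubbles) satisfies |G^(2)| = (1/2)·binom(D,2)·|G^(0)| + D - 2ω(G)/(D-1)!, where ω(G) is Gurău's degree, defined as the sum of the genera of the D!/2 jackets of G. -/

import Mathlib

open scoped Classical

structure PreGraph (D : ℕ) where
  W : Type
  B : Type
  E : Type
  [finW : Finite W]
  [finB : Finite B]
  [finE : Finite E]
  src : E → W
  tgt : E → B
  col : E → Fin D

attribute [instance] PreGraph.finW PreGraph.finB PreGraph.finE

namespace PreGraph

variable {D : ℕ}

/-- A regularly edge-colored bipartite graph: at every white (resp. black) vertex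
there is exactly one incident edge of each of the `D` colors. -/
def Regular (G : PreGraph D) : Prop :=
  (∀ w c, ∃! e, G.src e = w ∧ G.col e = c) ∧
  (∀ b c, ∃! e, G.tgt e = b ∧ G.col e = c)

/-- The simple graph on all the vertices of `G` whose edges are the edges of `G`
with color in `S`. -/
def adjOn (G : PreGraph D) (S : Set (Fin D)) : SimpleGraph (G.W ⊕ G.B) where
  Adj v w := ∃ e, G.col e ∈ S ∧
    ((v = Sum.inl (G.src e) ∧ w = Sum.inr (G.tgt e)) ∨
     (w = Sum.inl (G.src e) ∧ v = Sum.inr (G.tgt e)))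
  symm := by
    refine ⟨?_⟩
    rintro v w ⟨e, hc, h⟩
    exact ⟨e, hc, h.symm⟩
  loopless := by
    refine ⟨?_⟩
    rintro v ⟨e, hc, (⟨h1, h2⟩ | ⟨h1, h2⟩)⟩ <;> rw [h1] at h2 <;> exact Sum.inl_ne_inr h2

def Connected (G : PreGraph D) : Prop := (G.adjOn Set.univ).Connected

/-- The number of faces (connected components of the `{i,j}`-bicolored subgraph). -/
noncomputable def facesCount (G : PreGraph D) (i j : Fin D) : ℕ :=
  Nat.card ((G.adjOn {i, j}).ConnectedComponent)

/-- The total number of faces of `G` (over all unordered pairs of colors). -/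
noncomputable def totalFaces (G : PreGraph D) : ℕ :=
  ∑ p ∈ Finset.univ.filter (fun p : Fin D × Fin D => p.1 < p.2), G.facesCount p.1 p.2

/-- Number of faces of the jacket associated to a cyclic permutation `σ` of the colors:
the faces of colors `σ^q(0), σ^{q+1}(0)`. -/
noncomputable def jacketFaces (G : PreGraph (D+1)) (σ : Equiv.Perm (Fin (D+1))) : ℕ :=
  ∑ q ∈ Finset.range (D+1), G.facesCount ((σ ^ q) 0) ((σ ^ (q+1)) 0)

/-- The genus of the jacket ribbon graph associated to `σ`, via Euler's formula
`2 - 2g = V - E + F`. -/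
noncomputable def jacketGenus (G : PreGraph (D+1)) (σ : Equiv.Perm (Fin (D+1))) : ℚ :=
  (2 - ((Nat.card G.W : ℚ) + (Nat.card G.B : ℚ)) + (Nat.card G.E : ℚ)
      - (G.jacketFaces σ : ℚ)) / 2

/-- Gurău's degree: the sum of the genera of the `D!/2` jackets of `G`; each jacket
corresponds to a pair `σ, σ⁻¹` of cyclic permutations of the `D+1` colors, whence the
factor `1/2`. -/
noncomputable def gurauDegree (G : PreGraph (D+1)) : ℚ :=
  (1/2) * ∑ σ ∈ Finset.univ.filter
      (fun σ : Equiv.Perm (Fin (D+1)) => σ.IsCycle ∧ σ.support = Finset.univ),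
    G.jacketGenus σ

end PreGraph

/-- The connected sum `G #_{e,f} K`: delete `e` and `f` and add two new edges
`E = (s(e), t(f))` (coded `true`) and `F = (s(f), t(e))` (coded `false`), both of the
color of `e`. -/
noncomputable def connSum {D : ℕ} (G K : PreGraph D) (e : G.E) (f : K.E) :
    PreGraph D where
  W := G.W ⊕ K.W
  B := G.B ⊕ K.B
  E := {e' : G.E // e' ≠ e} ⊕ ({f' : K.E // f' ≠ f} ⊕ Bool)
  src := fun x => match x with
    | .inl e' => .inl (G.src e'.1)
    | .inr (.inl f') => .inr (K.src f'.1)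
    | .inr (.inr true) => .inl (G.src e)
    | .inr (.inr false) => .inr (K.src f)
  tgt := fun x => match x with
    | .inl e' => .inl (G.tgt e'.1)
    | .inr (.inl f') => .inr (K.tgt f'.1)
    | .inr (.inr true) => .inr (K.tgt f)
    | .inr (.inr false) => .inl (G.tgt e)
  col := fun x => match x with
    | .inl e' => G.col e'.1
    | .inr (.inl f') => K.col f'.1
    | .inr (.inr _) => G.col e


namespace FaceAux

open Finset Equiv Equiv.Perm

/-- For a full cycle `σ` on `Fin (n+1)`, the map `q ↦ σ^q 0` is a bijection. -/
lemma orbit_bij {n : ℕ} {σ : Equiv.Perm (Fin (n+1))} (hc : σ.IsCycle)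
    (hs : σ.support = Finset.univ) :
    Function.Bijective (fun q : Fin (n+1) => (σ ^ (q : ℕ)) 0) := by
  have horder : orderOf σ = n + 1 := by
    rw [hc.orderOf, hs, Finset.card_univ, Fintype.card_fin]
  rw [Fintype.bijective_iff_injective_and_card]
  refine ⟨?_, by simp⟩
  have key : ∀ a b : ℕ, a ≤ b → b < n + 1 → (σ ^ a) 0 = (σ ^ b) 0 → a = b := by
    intro a b hab hb h
    have h1 : (σ ^ (b - a)) ((σ ^ a) 0) = (σ ^ a) 0 := by
      have hmul : σ ^ (b - a) * σ ^ a = σ ^ b := by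
        rw [← pow_add]; congr 1; omega
      rw [← Equiv.Perm.mul_apply, hmul, ← h]
    have hmove2 : σ ((σ ^ a) 0) ≠ (σ ^ a) 0 := by
      have hm : (σ ^ a) 0 ∈ σ.support := by rw [hs]; exact Finset.mem_univ _
      exact Equiv.Perm.mem_support.mp hm
    have h2 : σ ^ (b - a) = 1 := (hc.pow_eq_one_iff' hmove2).mpr h1
    have h3 : orderOf σ ∣ b - a := orderOf_dvd_of_pow_eq_one h2
    rw [horder] at h3
    rcases Nat.eq_zero_or_pos (b - a) with h0 | h0
    · omega
    · exact absurd (Nat.le_of_dvd h0 h3) (by omega)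
  intro q r h
  rcases le_total (q : ℕ) (r : ℕ) with hle | hle
  · exact Fin.ext (key _ _ hle r.isLt h)
  · exact (Fin.ext (key _ _ hle q.isLt h.symm)).symm

/-- Reindex the jacket-face sum along the orbit of `0`. -/
lemma sum_range_orbit {n : ℕ} {σ : Equiv.Perm (Fin (n+1))} (hc : σ.IsCycle)
    (hs : σ.support = Finset.univ) (f : Fin (n+1) → Fin (n+1) → ℕ) :
    ∑ q ∈ Finset.range (n+1), f ((σ ^ q) 0) ((σ ^ (q+1)) 0)
      = ∑ x : Fin (n+1), f x (σ x) := by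
  rw [← Fin.sum_univ_eq_sum_range (fun q => f ((σ ^ q) 0) ((σ ^ (q+1)) 0)) (n+1)]
  rw [← Equiv.sum_comp (Equiv.ofBijective _ (orbit_bij hc hs)) (fun x => f x (σ x))]
  refine Finset.sum_congr rfl fun q _ => ?_
  show f ((σ ^ (q : ℕ)) 0) ((σ ^ ((q : ℕ)+1)) 0)
      = f ((σ ^ (q : ℕ)) 0) (σ ((σ ^ (q : ℕ)) 0))
  congr 1
  rw [pow_succ', Equiv.Perm.mul_apply]

/-- There are `n!` permutations of `Fin (n+1)` fixing `0`. -/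
lemma card_fix0 (n : ℕ) :
    (Finset.univ.filter (fun a : Equiv.Perm (Fin (n+1)) => a 0 = 0)).card
      = n.factorial := by
  have hbij := Finset.card_bij
    (s := (Finset.univ : Finset (Equiv.Perm (Fin n))))
    (t := Finset.univ.filter (fun a : Equiv.Perm (Fin (n+1)) => a 0 = 0))
    (fun π _ => Equiv.Perm.decomposeFin.symm (0, π)) ?_ ?_ ?_
  · rw [← hbij, Finset.card_univ, Fintype.card_perm, Fintype.card_fin]
  · intro π _
    simp [Equiv.Perm.decomposeFin_symm_apply_zero]
  · intro π1 _ π2 _ h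
    have h2 := congrArg Equiv.Perm.decomposeFin h
    simpa using h2
  · intro a ha
    have h0 : a 0 = 0 := (Finset.mem_filter.mp ha).2
    rcases hd : Equiv.Perm.decomposeFin a with ⟨p, π⟩
    have key : Equiv.Perm.decomposeFin.symm (p, π) = a := by
      rw [← hd]; exact Equiv.symm_apply_apply _ _
    have hp : p = 0 := by
      rw [← h0, ← key, Equiv.Perm.decomposeFin_symm_apply_zero]
    refine ⟨π, Finset.mem_univ _, ?_⟩
    rw [← hp]; exact key

/-- There are `(n+1)!` full cycles on `Fin (n+2)`. -/
lemma card_FC (n : ℕ) :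
    (Finset.univ.filter
      (fun σ : Equiv.Perm (Fin (n+2)) => σ.IsCycle ∧ σ.support = Finset.univ)).card
      = (n+1).factorial := by
  rw [← card_fix0 (n+1)]
  symm
  apply Finset.card_bij (fun a _ => a * finRotate (n+2) * a⁻¹)
  · intro a ha
    rw [Finset.mem_filter]
    refine ⟨Finset.mem_univ _, isCycle_finRotate.conj, ?_⟩
    rw [Equiv.Perm.support_conj, support_finRotate]
    ext x
    simp
  · intro a ha b hb h
    have ha0 : a 0 = 0 := (Finset.mem_filter.mp ha).2
    have hb0 : b 0 = 0 := (Finset.mem_filter.mp hb).2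
    have hcomm : Commute (b⁻¹ * a) (finRotate (n+2)) := by
      have h' := congrArg (fun ρ => b⁻¹ * ρ * a) h
      simp only [mul_assoc] at h'
      unfold Commute SemiconjBy
      simp only [mul_assoc]
      simpa [mul_assoc] using h'
    have hfix : ∀ x, (b⁻¹ * a) x = x := by
      intro x
      obtain ⟨q, hq⟩ := (orbit_bij isCycle_finRotate support_finRotate).2 x
      have hq' : ((finRotate (n+2)) ^ (q : ℕ)) 0 = x := hq
      have hcq : (b⁻¹ * a) * (finRotate (n+2)) ^ (q : ℕ)
          = (finRotate (n+2)) ^ (q : ℕ) * (b⁻¹ * a) := (hcomm.pow_right (q : ℕ))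
      have h00 : (b⁻¹ * a) 0 = 0 := by
        have hab : a 0 = b 0 := by rw [ha0, hb0]
        rw [Equiv.Perm.mul_apply, hab, Equiv.Perm.inv_def, Equiv.symm_apply_apply]
      calc (b⁻¹ * a) x = (b⁻¹ * a) (((finRotate (n+2)) ^ (q : ℕ)) 0) := by rw [hq']
        _ = ((b⁻¹ * a) * (finRotate (n+2)) ^ (q : ℕ)) 0 :=
            (Equiv.Perm.mul_apply _ _ _).symm
        _ = ((finRotate (n+2)) ^ (q : ℕ) * (b⁻¹ * a)) 0 := by rw [hcq]
        _ = ((finRotate (n+2)) ^ (q : ℕ)) ((b⁻¹ * a) 0) := Equiv.Perm.mul_apply _ _ _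
        _ = ((finRotate (n+2)) ^ (q : ℕ)) 0 := by rw [h00]
        _ = x := hq'
    have hba : b⁻¹ * a = 1 := Equiv.ext hfix
    have := congrArg (fun ρ => b * ρ) hba
    simpa [mul_assoc] using this
  · intro σ hσ
    obtain ⟨-, hc, hs⟩ := Finset.mem_filter.mp hσ
    have horder : orderOf σ = n + 2 := by
      rw [hc.orderOf, hs, Finset.card_univ, Fintype.card_fin]
    set a : Equiv.Perm (Fin (n+2)) := Equiv.ofBijective _ (orbit_bij hc hs) with hadef
    have haapp : ∀ q : Fin (n+2), a q = (σ ^ (q : ℕ)) 0 := fun q => rfl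
    have ha0 : a 0 = 0 := by
      rw [haapp]
      norm_num
    refine ⟨a, Finset.mem_filter.mpr ⟨Finset.mem_univ _, ha0⟩, ?_⟩
    have key : ∀ q : Fin (n+2), a (finRotate (n+2) q) = σ (a q) := by
      intro q
      rw [haapp, haapp, finRotate_succ_apply]
      have hval : ((q + 1 : Fin (n+2)) : ℕ) = ((q : ℕ) + 1) % (n+2) := by
        rw [Fin.val_add, Fin.val_one]
      have hpow : σ ^ (((q : ℕ) + 1) % (n + 2)) = σ ^ ((q : ℕ) + 1) := by
        have h5 := pow_mod_orderOf (x := σ) (n := (q : ℕ) + 1)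
        rwa [horder] at h5
      rw [hval, hpow, pow_succ', Equiv.Perm.mul_apply]
    refine Equiv.ext fun x => ?_
    obtain ⟨q, rfl⟩ := a.surjective x
    rw [Equiv.Perm.mul_apply, Equiv.Perm.mul_apply, Equiv.Perm.inv_def, Equiv.symm_apply_apply]
    exact key q


/-- Full cycles never fix a point. -/
lemma fc_ne {n : ℕ} {σ : Equiv.Perm (Fin (n+2))} (hs : σ.support = Finset.univ)
    (x : Fin (n+2)) : σ x ≠ x := by
  have : x ∈ σ.support := by rw [hs]; exact Finset.mem_univ _
  exact Equiv.Perm.mem_support.mp this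

/-- For `x ≠ j` there are `n!` full cycles on `Fin (n+2)` with `σ x = j`. -/
lemma card_FC_fiber (n : ℕ) (x j : Fin (n+2)) (hxj : x ≠ j) :
    ((Finset.univ.filter
        (fun σ : Equiv.Perm (Fin (n+2)) => σ.IsCycle ∧ σ.support = Finset.univ)).filter
        (fun σ => σ x = j)).card = n.factorial := by
  set FCs := Finset.univ.filter
      (fun σ : Equiv.Perm (Fin (n+2)) => σ.IsCycle ∧ σ.support = Finset.univ) with hFCs
  have step1 : ∀ j1 j2 : Fin (n+2), x ≠ j1 → x ≠ j2 →
      (FCs.filter (fun σ => σ x = j1)).card = (FCs.filter (fun σ => σ x = j2)).card := by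
    intro j1 j2 hj1 hj2
    set τ := Equiv.swap j1 j2 with hτ
    have hτx : τ x = x := Equiv.swap_apply_of_ne_of_ne hj1 hj2
    apply Finset.card_bij (fun σ _ => τ * σ * τ⁻¹)
    · intro σ hσ
      obtain ⟨hσ1, hσ2⟩ := Finset.mem_filter.mp hσ
      obtain ⟨-, hc, hs⟩ := Finset.mem_filter.mp hσ1
      rw [Finset.mem_filter]
      constructor
      · rw [hFCs, Finset.mem_filter]
        refine ⟨Finset.mem_univ _, hc.conj, ?_⟩
        rw [Equiv.Perm.support_conj, hs]
        ext y; simp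
      · have hτinv : τ⁻¹ x = x := by
          rw [hτ, Equiv.swap_inv]
          exact Equiv.swap_apply_of_ne_of_ne hj1 hj2
        rw [Equiv.Perm.mul_apply, Equiv.Perm.mul_apply, hτinv, hσ2]
        exact Equiv.swap_apply_left j1 j2
    · intro σ1 _ σ2 _ h
      have h2 := congrArg (fun ρ => τ⁻¹ * ρ * τ) h
      simpa [mul_assoc] using h2
    · intro σ' hσ'
      obtain ⟨hσ1, hσ2⟩ := Finset.mem_filter.mp hσ'
      obtain ⟨-, hc, hs⟩ := Finset.mem_filter.mp hσ1
      refine ⟨τ * σ' * τ⁻¹, ?_, ?_⟩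
      · rw [Finset.mem_filter]
        constructor
        · rw [hFCs, Finset.mem_filter]
          refine ⟨Finset.mem_univ _, hc.conj, ?_⟩
          rw [Equiv.Perm.support_conj, hs]
          ext y; simp
        · have hτinv : τ⁻¹ x = x := by
            rw [hτ, Equiv.swap_inv]
            exact Equiv.swap_apply_of_ne_of_ne hj1 hj2
          rw [Equiv.Perm.mul_apply, Equiv.Perm.mul_apply, hτinv, hσ2]
          exact Equiv.swap_apply_right j1 j2
      · have hτ2 : τ * τ = 1 := Equiv.swap_mul_self j1 j2
        have hgrp : τ * (τ * σ' * τ⁻¹) * τ⁻¹ = (τ * τ) * σ' * (τ * τ)⁻¹ := by group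
        rw [hgrp, hτ2]
        simp
  -- the fibers partition the full-cycle set
  have step2 : ∑ j2 : Fin (n+2), (FCs.filter (fun σ => σ x = j2)).card = (n+1).factorial := by
    rw [← card_FC n, hFCs]
    exact (Finset.card_eq_sum_card_fiberwise
      (fun σ _ => Finset.mem_univ (σ x))).symm
  have step3 : (FCs.filter (fun σ => σ x = x)).card = 0 := by
    rw [Finset.card_eq_zero, Finset.filter_eq_empty_iff]
    intro σ hσ
    obtain ⟨-, -, hs⟩ := Finset.mem_filter.mp hσ
    exact fc_ne hs x
  have step4 : ∑ j2 : Fin (n+2), (FCs.filter (fun σ => σ x = j2)).card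
      = (n + 1) * (FCs.filter (fun σ => σ x = j)).card := by
    rw [← Finset.add_sum_erase _ _ (Finset.mem_univ x), step3, zero_add]
    rw [Finset.sum_congr rfl (fun j2 hj2 => step1 j2 j (Finset.ne_of_mem_erase hj2).symm hxj)]
    rw [Finset.sum_const, Finset.card_erase_of_mem (Finset.mem_univ x), Finset.card_univ,
      Fintype.card_fin, smul_eq_mul]
    congr 1
  rw [step4] at step2
  have hfs : (n+1).factorial = (n+1) * n.factorial := Nat.factorial_succ n
  exact Nat.eq_of_mul_eq_mul_left (Nat.succ_pos n) (step2.trans hfs)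

/-- The master sum over all full cycles. -/
lemma sum_FC (n : ℕ) (f : Fin (n+2) → Fin (n+2) → ℕ) :
    ∑ σ ∈ Finset.univ.filter
        (fun σ : Equiv.Perm (Fin (n+2)) => σ.IsCycle ∧ σ.support = Finset.univ),
      ∑ x : Fin (n+2), f x (σ x)
      = n.factorial * ∑ p ∈ Finset.univ.filter
          (fun p : Fin (n+2) × Fin (n+2) => p.1 ≠ p.2), f p.1 p.2 := by
  set FCs := Finset.univ.filter
      (fun σ : Equiv.Perm (Fin (n+2)) => σ.IsCycle ∧ σ.support = Finset.univ) with hFCs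
  rw [Finset.sum_comm]
  have inner : ∀ x : Fin (n+2), ∑ σ ∈ FCs, f x (σ x)
      = ∑ j : Fin (n+2), if x ≠ j then n.factorial * f x j else 0 := by
    intro x
    have hfib := Finset.sum_fiberwise_of_maps_to (s := FCs)
      (t := (Finset.univ : Finset (Fin (n+2)))) (g := fun σ => σ x)
      (fun σ _ => Finset.mem_univ _) (fun σ => f x (σ x))
    rw [← hfib]
    refine Finset.sum_congr rfl fun j _ => ?_
    rcases eq_or_ne x j with rfl | hxj
    · rw [if_neg (by simp)]
      refine Finset.sum_eq_zero fun σ hσ => ?_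
      obtain ⟨hσ1, hσ2⟩ := Finset.mem_filter.mp hσ
      obtain ⟨-, -, hs⟩ := Finset.mem_filter.mp hσ1
      exact absurd hσ2 (fc_ne hs x)
    · rw [if_pos hxj]
      have hval : ∀ σ ∈ FCs.filter (fun σ => σ x = j), f x (σ x) = f x j := by
        intro σ hσ
        rw [(Finset.mem_filter.mp hσ).2]
      rw [Finset.sum_congr rfl hval, Finset.sum_const, card_FC_fiber n x j hxj, smul_eq_mul]
  rw [Finset.sum_congr rfl fun x _ => inner x]
  rw [Finset.sum_filter, Fintype.sum_prod_type, Finset.mul_sum]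
  refine Finset.sum_congr rfl fun x _ => ?_
  rw [Finset.mul_sum]
  refine Finset.sum_congr rfl fun j _ => ?_
  rw [mul_ite, mul_zero]

/-- Sum over ordered distinct pairs vs unordered pairs for a symmetric function. -/
lemma sum_ne_eq_two_mul {n : ℕ} (F : Fin n → Fin n → ℕ) (hF : ∀ i j, F i j = F j i) :
    ∑ p ∈ Finset.univ.filter (fun p : Fin n × Fin n => p.1 ≠ p.2), F p.1 p.2
      = 2 * ∑ p ∈ Finset.univ.filter (fun p : Fin n × Fin n => p.1 < p.2), F p.1 p.2 := by
  have hsplit : Finset.univ.filter (fun p : Fin n × Fin n => p.1 ≠ p.2)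
      = Finset.univ.filter (fun p : Fin n × Fin n => p.1 < p.2)
        ∪ Finset.univ.filter (fun p : Fin n × Fin n => p.2 < p.1) := by
    ext p
    simp only [Finset.mem_filter, Finset.mem_univ, true_and, Finset.mem_union]
    constructor
    · intro h; exact lt_or_gt_of_ne h
    · rintro (h | h)
      · exact ne_of_lt h
      · exact (ne_of_lt h).symm
  have hdisj : Disjoint (Finset.univ.filter (fun p : Fin n × Fin n => p.1 < p.2))
      (Finset.univ.filter (fun p : Fin n × Fin n => p.2 < p.1)) := by
    rw [Finset.disjoint_left]
    intro p hp1 hp2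
    simp only [Finset.mem_filter, Finset.mem_univ, true_and] at hp1 hp2
    exact absurd hp2 (not_lt_of_gt hp1)
  have hswap : ∑ p ∈ Finset.univ.filter (fun p : Fin n × Fin n => p.2 < p.1), F p.1 p.2
      = ∑ p ∈ Finset.univ.filter (fun p : Fin n × Fin n => p.1 < p.2), F p.1 p.2 := by
    apply Finset.sum_nbij' (i := fun p => (p.2, p.1)) (j := fun p => (p.2, p.1))
    · intro p hp
      simp only [Finset.mem_filter, Finset.mem_univ, true_and] at hp ⊢
      exact hp
    · intro p hp
      simp only [Finset.mem_filter, Finset.mem_univ, true_and] at hp ⊢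
      exact hp
    · intro p _; rfl
    · intro p _; rfl
    · intro p _
      exact hF p.1 p.2
  rw [hsplit, Finset.sum_union hdisj, hswap, two_mul]

end FaceAux


namespace FaceAux

lemma facesCount_comm {D : ℕ} (G : PreGraph D) (i j : Fin D) :
    G.facesCount i j = G.facesCount j i := by
  unfold PreGraph.facesCount
  rw [Set.pair_comm]

lemma card_E_eq {D : ℕ} (G : PreGraph D) (h : G.Regular) :
    Nat.card G.E = D * Nat.card G.W ∧ Nat.card G.E = D * Nat.card G.B := by
  constructor
  · have hb : Function.Bijective (fun e : G.E => (G.src e, G.col e)) := by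
      constructor
      · intro e1 e2 hee
        obtain ⟨e, -, hu⟩ := h.1 (G.src e1) (G.col e1)
        have h1 := hu e1 ⟨rfl, rfl⟩
        have h2 := hu e2 ⟨(congrArg Prod.fst hee).symm, (congrArg Prod.snd hee).symm⟩
        rw [h1, h2]
      · rintro ⟨w, c⟩
        obtain ⟨e, ⟨h1, h2⟩, -⟩ := h.1 w c
        exact ⟨e, by simp [h1, h2]⟩
    rw [Nat.card_congr (Equiv.ofBijective _ hb), Nat.card_prod]
    simp [mul_comm]
  · have hb : Function.Bijective (fun e : G.E => (G.tgt e, G.col e)) := by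
      constructor
      · intro e1 e2 hee
        obtain ⟨e, -, hu⟩ := h.2 (G.tgt e1) (G.col e1)
        have h1 := hu e1 ⟨rfl, rfl⟩
        have h2 := hu e2 ⟨(congrArg Prod.fst hee).symm, (congrArg Prod.snd hee).symm⟩
        rw [h1, h2]
      · rintro ⟨b, c⟩
        obtain ⟨e, ⟨h1, h2⟩, -⟩ := h.2 b c
        exact ⟨e, by simp [h1, h2]⟩
    rw [Nat.card_congr (Equiv.ofBijective _ hb), Nat.card_prod]
    simp [mul_comm]

end FaceAux

/-- Face–counting formula for a closed connected `(D+1)`-colored graph: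
`|G⁽²⁾| = (1/2)·C(D,2)·|G⁽⁰⁾| + D - 2ω(G)/(D-1)!`. -/
theorem face_counting_formula (D : ℕ) (G : PreGraph (D+1))
    (hreg : G.Regular) (hconn : G.Connected) :
    (G.totalFaces : ℚ) =
      (1/2) * (D.choose 2 : ℚ) * ((Nat.card G.W : ℚ) + (Nat.card G.B : ℚ))
        + (D : ℚ) - 2 * G.gurauDegree / ((D-1).factorial : ℚ) := by
  rcases D with _ | d
  · -- the degenerate case `D = 0`
    have hT : (G.totalFaces : ℚ) = 0 := by
      have hemp : Finset.univ.filter (fun p : Fin (0+1) × Fin (0+1) => p.1 < p.2) = ∅ := by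
        rw [Finset.filter_eq_empty_iff]
        intro p _
        have h1 := p.1.isLt
        have h2 := p.2.isLt
        have h12 : p.1 = p.2 := Fin.ext (by omega)
        rw [h12]
        exact lt_irrefl _
      unfold PreGraph.totalFaces
      rw [hemp, Finset.sum_empty, Nat.cast_zero]
    have hω : G.gurauDegree = 0 := by
      unfold PreGraph.gurauDegree
      have hemp : Finset.univ.filter (fun σ : Equiv.Perm (Fin (0+1)) =>
          σ.IsCycle ∧ σ.support = Finset.univ) = ∅ := by
        rw [Finset.filter_eq_empty_iff]
        rintro σ - ⟨hc, -⟩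
        have hσ1 : σ = 1 := Equiv.ext fun x => Fin.ext
          (by have := (σ x).isLt; have := x.isLt; omega)
        exact hc.ne_one hσ1
      rw [hemp, Finset.sum_empty, mul_zero]
    rw [hT, hω]
    norm_num [Nat.choose]
  · -- the main case `D = d + 1`
    have hcards := FaceAux.card_E_eq G hreg
    have hWB : (Nat.card G.B : ℚ) = (Nat.card G.W : ℚ) := by
      have h3 : (d+1+1) * Nat.card G.B = (d+1+1) * Nat.card G.W :=
        (hcards.2.symm.trans hcards.1)
      have h4 := Nat.eq_of_mul_eq_mul_left (Nat.succ_pos _) h3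
      exact_mod_cast congrArg (fun k : ℕ => (k : ℚ)) h4
    have hEW : (Nat.card G.E : ℚ) = ((d:ℚ) + 2) * (Nat.card G.W : ℚ) := by
      rw [hcards.1]; push_cast; ring
    have hJF : ∀ σ ∈ (Finset.univ.filter (fun σ : Equiv.Perm (Fin (d+1+1)) =>
        σ.IsCycle ∧ σ.support = Finset.univ)), G.jacketFaces σ
          = ∑ x : Fin (d+1+1), G.facesCount x (σ x) := by
      intro σ hσ
      obtain ⟨-, hc, hs⟩ := Finset.mem_filter.mp hσ
      exact FaceAux.sum_range_orbit (n := d+1) hc hs G.facesCount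
    have hsum1 : ∑ σ ∈ (Finset.univ.filter (fun σ : Equiv.Perm (Fin (d+1+1)) =>
          σ.IsCycle ∧ σ.support = Finset.univ)),
          ∑ x : Fin (d+1+1), G.facesCount x (σ x)
        = d.factorial * ∑ p ∈ Finset.univ.filter
            (fun p : Fin (d+1+1) × Fin (d+1+1) => p.1 ≠ p.2), G.facesCount p.1 p.2 :=
      FaceAux.sum_FC d G.facesCount
    have hsum2 : ∑ p ∈ Finset.univ.filter
          (fun p : Fin (d+1+1) × Fin (d+1+1) => p.1 ≠ p.2), G.facesCount p.1 p.2
        = 2 * G.totalFaces :=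
      FaceAux.sum_ne_eq_two_mul G.facesCount (fun i j => FaceAux.facesCount_comm G i j)
    have hcard : (Finset.univ.filter (fun σ : Equiv.Perm (Fin (d+1+1)) =>
        σ.IsCycle ∧ σ.support = Finset.univ)).card = (d+1).factorial :=
      FaceAux.card_FC d
    have hsumJF : ∑ σ ∈ (Finset.univ.filter (fun σ : Equiv.Perm (Fin (d+1+1)) =>
        σ.IsCycle ∧ σ.support = Finset.univ)), G.jacketFaces σ
          = d.factorial * (2 * G.totalFaces) := by
      rw [Finset.sum_congr rfl hJF, hsum1, hsum2]
    have hGD : G.gurauDegree = (((d+1).factorial : ℚ)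
          * (2 - ((Nat.card G.W : ℚ) + (Nat.card G.B : ℚ)) + (Nat.card G.E : ℚ))
        - (d.factorial : ℚ) * (2 * (G.totalFaces : ℚ))) / 4 := by
      unfold PreGraph.gurauDegree PreGraph.jacketGenus
      rw [← Finset.sum_div, Finset.sum_sub_distrib, Finset.sum_const, hcard, nsmul_eq_mul,
        ← Nat.cast_sum, hsumJF]
      push_cast
      ring
    have hch : ((d+1).choose 2 : ℚ) = (((d:ℚ)+1) * d) / 2 := by
      have h2 : (d+1).choose 2 * 2 = (d+1) * d := by
        rw [Nat.choose_two_right]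
        simp only [Nat.add_sub_cancel]
        refine Nat.div_mul_cancel ?_
        have : Even ((d+1) * d) := by
          rw [Nat.mul_comm]; exact Nat.even_mul_succ_self d
        exact this.two_dvd
      have h3 : (((d+1).choose 2 : ℕ) : ℚ) * 2 = (((d:ℚ))+1) * d := by
        exact_mod_cast congrArg (fun k : ℕ => (k : ℚ)) h2
      field_simp
      linarith [h3]
    have hfac : (((d+1).factorial : ℕ) : ℚ) = ((d:ℚ)+1) * (d.factorial : ℚ) := by
      rw [Nat.factorial_succ]; push_cast; ring
    have hd0 : ((d.factorial : ℕ) : ℚ) ≠ 0 := Nat.cast_ne_zero.mpr (Nat.factorial_ne_zero d)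
    rw [hGD, hWB, hEW, hch, hfac]
    simp only [Nat.add_sub_cancel]
    push_cast
    field_simp
    ring
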